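/- arXiv:2103.11158 — 6 statements merged into one kernel-verified Lean document; each statement's English description precedes it below -/
import Mathlib

section
/- Every quotient group of a discrete p-toral group is discrete p-toral. -/
/-- ℚ/ℤ as an additive group. -/
abbrev QmodZ : Type := ℚ ⧸ AddSubgroup.zmultiples (1 : ℚ)

/-- The Prüfer p-group ℤ/p^∞, realized as the p-primary component of ℚ/ℤ,
written multiplicatively. -/
def Prufer (p : ℕ) [Fact p.Prime] : Type :=
  Multiplicative (AddCommGroup.primaryComponent QmodZ p)

instance (p : ℕ) [Fact p.Prime] : CommGroup (Prufer p) :=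
  Multiplicative.commGroup

/-- A group `S` is *discrete p-toral* if it has a normal subgroup `S₀` isomorphic to a
finite direct product of copies of `ℤ/p^∞` such that `S/S₀` is a finite `p`-group. -/
def IsDiscretePToral (p : ℕ) [Fact p.Prime] (S : Type*) [Group S] : Prop :=
  ∃ S₀ : Subgroup S, ∃ _ : S₀.Normal,
    (∃ r : ℕ, Nonempty (S₀ ≃* (Fin r → Prufer p))) ∧
    Finite (S ⧸ S₀) ∧ IsPGroup p (S ⧸ S₀)

namespace PruferAux

variable (p : ℕ) [Fact p.Prime]

/-- The additive Prüfer group as an `AddSubgroup` of `ℚ/ℤ`. -/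
abbrev P : AddSubgroup QmodZ := AddCommGroup.primaryComponent QmodZ p

lemma p_pos : 0 < p := (Fact.out : p.Prime).pos

lemma addOrderOf_mk_inv_pow (n : ℕ) :
    addOrderOf (QuotientAddGroup.mk (((p : ℚ) ^ n)⁻¹) : QmodZ) = p ^ n := by
  have h1 : Fact ((0:ℚ) < 1) := ⟨one_pos⟩
  have := AddCircle.addOrderOf_period_div (p := (1:ℚ)) (n := p ^ n)
    (pow_pos (p_pos p) n)
  rw [show ((1:ℚ) / ((p ^ n : ℕ) : ℚ)) = ((p : ℚ) ^ n)⁻¹ by push_cast; rw [one_div]] at this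
  exact this

/-- The standard generators of the Prüfer group. -/
def g (n : ℕ) : ↥(P p) :=
  ⟨QuotientAddGroup.mk (((p : ℚ) ^ n)⁻¹), ⟨n, by rw [← addOrderOf_mk_inv_pow p n]; exact addOrderOf_nsmul_eq_zero _⟩⟩

lemma addOrderOf_g (n : ℕ) : addOrderOf (g p n) = p ^ n := by
  have := addOrderOf_injective (P p).subtype Subtype.coe_injective (g p n)
  rw [← this]
  exact addOrderOf_mk_inv_pow p n

lemma zsmul_g_eq_zero_iff {a : ℤ} {n : ℕ} : a • g p n = 0 ↔ ((p : ℤ) ^ n) ∣ a := by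
  rw [← addOrderOf_dvd_iff_zsmul_eq_zero, addOrderOf_g]
  push_cast
  rfl

lemma pow_smul_g (k n : ℕ) : ((p : ℤ) ^ k) • g p (n + k) = g p n := by
  apply Subtype.ext
  rw [AddSubgroup.coe_zsmul]
  show ((p:ℤ) ^ k) • (QuotientAddGroup.mk (((p : ℚ) ^ (n+k))⁻¹) : QmodZ)
      = QuotientAddGroup.mk (((p : ℚ) ^ n)⁻¹)
  rw [← QuotientAddGroup.mk_zsmul]
  congr 1
  have hp : (p:ℚ) ≠ 0 := by exact_mod_cast (p_pos p).ne'
  rw [zsmul_eq_mul, pow_add, mul_inv]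
  push_cast
  field_simp

lemma g_zero : g p 0 = 0 := by
  apply Subtype.ext
  show (QuotientAddGroup.mk (((p : ℚ) ^ 0)⁻¹) : QmodZ) = 0
  rw [QuotientAddGroup.eq_zero_iff]
  simp only [AddSubgroup.mem_zmultiples_iff]
  exact ⟨1, by norm_num⟩

/-- Every element of the Prüfer group is an integer multiple of some `g n`. -/
lemma exists_rep (x : ↥(P p)) : ∃ (n : ℕ) (a : ℤ), x = a • g p n := by
  obtain ⟨x, hx⟩ := x
  obtain ⟨n, hn⟩ := hx
  obtain ⟨q, rfl⟩ := QuotientAddGroup.mk_surjective x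
  have h0 : ((p ^ n : ℕ)) • (QuotientAddGroup.mk q : QmodZ) = 0 := by
    rw [← hn]
  rw [← QuotientAddGroup.mk_nsmul, QuotientAddGroup.eq_zero_iff] at h0
  obtain ⟨m, hm⟩ := h0
  refine ⟨n, m, ?_⟩
  apply Subtype.ext
  show (QuotientAddGroup.mk q : QmodZ) = m • (QuotientAddGroup.mk (((p : ℚ) ^ n)⁻¹) : QmodZ)
  rw [← QuotientAddGroup.mk_zsmul]
  congr 1
  have hp : ((p:ℚ) ^ n) ≠ 0 := pow_ne_zero _ (by exact_mod_cast (p_pos p).ne')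
  have : (m : ℚ) = (p ^ n : ℕ) • q := by rw [← hm]; simp
  simp only [nsmul_eq_mul] at this
  push_cast at this
  rw [zsmul_eq_mul, this, mul_comm, inv_mul_cancel_left₀ hp]


lemma pow_smul_surjective (n : ℕ) :
    Function.Surjective (fun y : ↥(P p) => ((p:ℤ) ^ n) • y) := by
  intro x
  obtain ⟨m, a, rfl⟩ := exists_rep p x
  refine ⟨a • g p (m + n), ?_⟩
  simp only [smul_comm ((p:ℤ)^n) a, pow_smul_g]

lemma smul_mem_of_coprime {u : ℤ} (hu : IsCoprime u ((p:ℤ))) {n : ℕ}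
    (H : AddSubgroup ↥(P p)) (h : (u • g p n) ∈ H) : g p n ∈ H := by
  have hc : IsCoprime u ((p:ℤ) ^ n) := hu.pow_right
  obtain ⟨c, d, hcd⟩ := hc
  have key : (c * u) • g p n = g p n := by
    have h1 : c * u = 1 - d * (p:ℤ)^n := by linarith
    rw [h1, sub_smul, one_smul, mul_smul, (zsmul_g_eq_zero_iff p).2 dvd_rfl]
    simp
  rw [← key, mul_smul]
  exact AddSubgroup.zsmul_mem H h c

lemma subgroup_eq (H : AddSubgroup ↥(P p)) (hH : ∃ k, g p k ∉ H) :
    ∃ n : ℕ, H = AddSubgroup.zmultiples (g p n) := by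
  classical
  have hp : Prime ((p:ℤ)) := Nat.prime_iff_prime_int.mp (Fact.out : p.Prime)
  have h0 : g p 0 ∈ H := by rw [g_zero]; exact H.zero_mem
  set k₀ := Nat.find hH with hk₀def
  have hk₀ : g p k₀ ∉ H := Nat.find_spec hH
  have hmin : ∀ m < k₀, g p m ∈ H := fun m hm => not_not.mp (Nat.find_min hH hm)
  have hk₀pos : k₀ ≠ 0 := fun h => hk₀ (h ▸ h0)
  obtain ⟨n, hn⟩ : ∃ n, k₀ = n + 1 :=
    ⟨k₀ - 1, (Nat.succ_pred_eq_of_pos (Nat.pos_of_ne_zero hk₀pos)).symm⟩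
  have hgn : g p n ∈ H := hmin n (by omega)
  have hgn1 : g p (n+1) ∉ H := hn ▸ hk₀
  refine ⟨n, le_antisymm ?_ (by rw [AddSubgroup.zmultiples_le]; exact hgn)⟩
  intro x hx
  obtain ⟨m, a, rfl⟩ := exists_rep p x
  have key : ((p:ℤ) ^ n * a) • g p m = 0 := by
    by_contra hne
    have ha : a ≠ 0 := by rintro rfl; simp at hne
    obtain ⟨k, u, hu, hau⟩ : ∃ (k : ℕ) (u : ℤ), ¬ (p:ℤ) ∣ u ∧ a = (p:ℤ) ^ k * u := by
      obtain ⟨k, u, hu, hau⟩ := Nat.exists_eq_pow_mul_and_not_dvd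
        (Int.natAbs_ne_zero.mpr ha) p (Fact.out : p.Prime).ne_one
      have hu' : ¬ (p:ℤ) ∣ (u:ℤ) := by exact_mod_cast fun h => hu (Int.natCast_dvd_natCast.mp h)
      rcases Int.natAbs_eq a with h | h
      · exact ⟨k, u, hu', by rw [h, hau]; push_cast; ring⟩
      · exact ⟨k, -u, by simpa using hu', by rw [h, hau]; push_cast; ring⟩
    have hkm : k < m := by
      by_contra hkm
      push_neg at hkm
      have hd : ((p:ℤ) ^ m) ∣ a :=
        ⟨(p:ℤ)^(k - m) * u, by rw [hau, ← mul_assoc, ← pow_add]; congr 2; omega⟩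
      have : a • g p m = 0 := (zsmul_g_eq_zero_iff p).2 hd
      rw [mul_smul, this, smul_zero] at hne; exact hne rfl
    have hps := pow_smul_g p k (m - k)
    rw [show m - k + k = m by omega] at hps
    have hx' : a • g p m = u • g p (m - k) := by
      rw [hau, mul_comm, mul_smul, ← hps, smul_comm]
    have hmk : n + 1 ≤ m - k := by
      by_contra hmk
      push_neg at hmk
      apply hne
      rw [mul_smul, hx', smul_comm,
        (zsmul_g_eq_zero_iff p).2 (pow_dvd_pow _ (by omega : m - k ≤ n)), smul_zero]
    have hcop : IsCoprime u ((p:ℤ)) :=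
      ((hp.irreducible.coprime_iff_not_dvd).2 hu).symm
    have hgmk : g p (m - k) ∈ H :=
      smul_mem_of_coprime p hcop H (by rw [← hx']; exact hx)
    apply hgn1
    have hps2 := pow_smul_g p (m - k - (n+1)) (n+1)
    rw [show n + 1 + (m - k - (n + 1)) = m - k by omega] at hps2
    rw [← hps2]
    exact AddSubgroup.zsmul_mem H hgmk _
  rw [AddSubgroup.mem_zmultiples_iff]
  by_cases hmn : m ≤ n
  · have hps := pow_smul_g p (n - m) m
    rw [show m + (n - m) = n by omega] at hps
    exact ⟨a * (p:ℤ) ^ (n - m), by rw [mul_comm, mul_smul, smul_comm, hps]⟩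
  · push_neg at hmn
    have hps := pow_smul_g p (m - n) n
    rw [show n + (m - n) = m by omega] at hps
    have hd : ((p:ℤ) ^ (m - n)) ∣ a := by
      have h1 : ((p:ℤ) ^ m) ∣ (p:ℤ)^n * a := by
        rw [← zsmul_g_eq_zero_iff p]; exact key
      have h2 : ((p:ℤ) ^ n * (p:ℤ) ^ (m - n)) ∣ (p:ℤ)^n * a := by
        rw [← pow_add, show n + (m - n) = m by omega]; exact h1
      exact (mul_dvd_mul_iff_left (pow_ne_zero n (by exact_mod_cast hp.ne_zero))).mp h2
    obtain ⟨b, rfl⟩ := hd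
    exact ⟨b, by rw [← hps, mul_smul, smul_comm]⟩



lemma zsmul_g_eq_iff {a b : ℤ} {n : ℕ} :
    a • g p n = b • g p n ↔ ((p:ℤ) ^ n) ∣ (a - b) := by
  rw [← sub_eq_zero, ← sub_smul, zsmul_g_eq_zero_iff]

lemma smul_surjective {n : ℤ} (hn : n ≠ 0) :
    Function.Surjective (fun y : ↥(P p) => n • y) := by
  have hp : Prime ((p:ℤ)) := Nat.prime_iff_prime_int.mp (Fact.out : p.Prime)
  intro x
  obtain ⟨m, a, rfl⟩ := exists_rep p x
  obtain ⟨k, u, hu, hnu⟩ : ∃ (k : ℕ) (u : ℤ), ¬ (p:ℤ) ∣ u ∧ n = (p:ℤ) ^ k * u := by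
    obtain ⟨k, u, hu, hau⟩ := Nat.exists_eq_pow_mul_and_not_dvd
      (Int.natAbs_ne_zero.mpr hn) p (Fact.out : p.Prime).ne_one
    have hu' : ¬ (p:ℤ) ∣ (u:ℤ) := by exact_mod_cast fun h => hu (Int.natCast_dvd_natCast.mp h)
    rcases Int.natAbs_eq n with h | h
    · exact ⟨k, u, hu', by rw [h, hau]; push_cast; ring⟩
    · exact ⟨k, -u, by simpa using hu', by rw [h, hau]; push_cast; ring⟩
  have hcop : IsCoprime u ((p:ℤ)) := ((hp.irreducible.coprime_iff_not_dvd).2 hu).symm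
  obtain ⟨c, d, hcd⟩ : IsCoprime u ((p:ℤ) ^ (m + k)) := hcop.pow_right
  refine ⟨(c * a) • g p (m + k), ?_⟩
  have hps := pow_smul_g p k m
  have hxg : a • g p m = ((p:ℤ)^k * a) • g p (m + k) := by
    rw [mul_smul, ← hps]; rw [smul_comm]
  show n • (c * a) • g p (m + k) = a • g p m
  rw [hxg, smul_smul, zsmul_g_eq_iff]
  refine ⟨-(a * d * (p:ℤ)^k), ?_⟩
  rw [hnu]
  linear_combination ((p:ℤ)^k * a) * hcd

noncomputable instance : DivisibleBy ↥(P p) ℤ :=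
  divisibleByOfSMulRightSurj _ _ (fun {n} hn => smul_surjective p hn)

lemma mem_zmultiples_g_iff {n : ℕ} {x : ↥(P p)} :
    x ∈ AddSubgroup.zmultiples (g p n) ↔ ((p:ℤ) ^ n) • x = 0 := by
  have hp : Prime ((p:ℤ)) := Nat.prime_iff_prime_int.mp (Fact.out : p.Prime)
  constructor
  · rintro ⟨c, rfl⟩
    simp only [smul_comm ((p:ℤ)^n) c, (zsmul_g_eq_zero_iff p).2 dvd_rfl, smul_zero]
  · intro key
    obtain ⟨m, a, rfl⟩ := exists_rep p x
    rw [smul_smul] at key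
    rw [AddSubgroup.mem_zmultiples_iff]
    by_cases hmn : m ≤ n
    · have hps := pow_smul_g p (n - m) m
      rw [show m + (n - m) = n by omega] at hps
      exact ⟨a * (p:ℤ) ^ (n - m), by rw [mul_comm, mul_smul, smul_comm, hps]⟩
    · push_neg at hmn
      have hps := pow_smul_g p (m - n) n
      rw [show n + (m - n) = m by omega] at hps
      have hd : ((p:ℤ) ^ (m - n)) ∣ a := by
        have h1 : ((p:ℤ) ^ m) ∣ (p:ℤ)^n * a := by
          rw [← zsmul_g_eq_zero_iff p]; exact key
        have h2 : ((p:ℤ) ^ n * (p:ℤ) ^ (m - n)) ∣ (p:ℤ)^n * a := by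
          rw [← pow_add, show n + (m - n) = m by omega]; exact h1
        exact (mul_dvd_mul_iff_left (pow_ne_zero n (by exact_mod_cast hp.ne_zero))).mp h2
      obtain ⟨b, rfl⟩ := hd
      exact ⟨b, by rw [← hps, mul_smul, smul_comm]⟩

/-- Any quotient of the (additive) Prüfer group is trivial or Prüfer. -/
lemma quot_single (H : AddSubgroup ↥(P p)) :
    ∃ s, Nonempty ((↥(P p) ⧸ H) ≃+ (Fin s → ↥(P p))) := by
  by_cases hH : ∀ k, g p k ∈ H
  · have htop : H = ⊤ := by
      rw [eq_top_iff]
      intro x _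
      obtain ⟨m, a, rfl⟩ := exists_rep p x
      exact AddSubgroup.zsmul_mem H (hH m) a
    subst htop
    haveI : Subsingleton (↥(P p) ⧸ (⊤ : AddSubgroup ↥(P p))) :=
      QuotientAddGroup.subsingleton_quotient_top
    haveI : Unique (↥(P p) ⧸ (⊤ : AddSubgroup ↥(P p))) := Unique.mk' _
    exact ⟨0, ⟨AddEquiv.ofUnique⟩⟩
  · push_neg at hH
    obtain ⟨n, rfl⟩ := subgroup_eq p H hH
    set φ : ↥(P p) →+ ↥(P p) :=
      AddMonoidHom.mk' (fun x => ((p:ℤ)^n) • x) (fun a b => smul_add _ a b) with hφ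
    have hsurj : Function.Surjective φ := pow_smul_surjective p n
    have hker : φ.ker = AddSubgroup.zmultiples (g p n) := by
      ext x
      rw [AddMonoidHom.mem_ker, mem_zmultiples_g_iff]
      rfl
    exact ⟨1, ⟨(QuotientAddGroup.quotientAddEquivOfEq hker.symm).trans
      ((QuotientAddGroup.quotientKerEquivOfSurjective φ hsurj).trans
        (AddEquiv.mk' (Equiv.funUnique (Fin 1) ↥(P p)).symm (fun _ _ => rfl)))⟩⟩


/-- Combining two finite powers into one. -/
def finCombine (a b : ℕ) (M : Type) [AddCommGroup M] :
    ((Fin a → M) × (Fin b → M)) ≃+ (Fin (a + b) → M) :=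
  AddEquiv.mk'
    ((Equiv.sumArrowEquivProdArrow (Fin a) (Fin b) M).symm.trans
      (Equiv.arrowCongr finSumFinEquiv (Equiv.refl M)))
    (by
      intro x y
      funext i
      cases h : finSumFinEquiv.symm i <;>
        simp [Equiv.sumArrowEquivProdArrow, Equiv.arrowCongr, h])

lemma quot_prod (Q : Type) [AddCommGroup Q]
    (hQ : ∀ K : AddSubgroup Q, ∃ s, Nonempty ((Q ⧸ K) ≃+ (Fin s → ↥(P p))))
    (H : AddSubgroup (↥(P p) × Q)) :
    ∃ s, Nonempty (((↥(P p) × Q) ⧸ H) ≃+ (Fin s → ↥(P p))) := by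
  classical
  set H₁ : AddSubgroup ↥(P p) := H.comap (AddMonoidHom.inl ↥(P p) Q) with hH₁
  set H₂ : AddSubgroup Q := H.map (AddMonoidHom.snd ↥(P p) Q) with hH₂
  set f : (↥(P p) ⧸ H₁) →+ ((↥(P p) × Q) ⧸ H) :=
    QuotientAddGroup.map H₁ H (AddMonoidHom.inl _ _) le_rfl with hf
  set π : ((↥(P p) × Q) ⧸ H) →+ (Q ⧸ H₂) :=
    QuotientAddGroup.map H H₂ (AddMonoidHom.snd _ _)
      (fun x hx => AddSubgroup.mem_comap.2 (AddSubgroup.mem_map_of_mem _ hx)) with hπ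
  have hf_inj : Function.Injective f := by
    rw [injective_iff_map_eq_zero]
    intro x hx
    obtain ⟨y, rfl⟩ := QuotientAddGroup.mk_surjective x
    rw [hf, QuotientAddGroup.map_mk, QuotientAddGroup.eq_zero_iff] at hx
    rw [QuotientAddGroup.eq_zero_iff]
    exact hx
  have hπ_surj : Function.Surjective π := by
    intro q
    obtain ⟨y, rfl⟩ := QuotientAddGroup.mk_surjective q
    exact ⟨QuotientAddGroup.mk ((0 : ↥(P p)), y), rfl⟩
  have hπf : ∀ z, π (f z) = 0 := by
    intro z
    obtain ⟨y, rfl⟩ := QuotientAddGroup.mk_surjective z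
    rw [hf, QuotientAddGroup.map_mk, hπ, QuotientAddGroup.map_mk]
    simp
  have hker : ∀ b, π b = 0 → b ∈ f.range := by
    intro b hb
    obtain ⟨⟨x, q⟩, rfl⟩ := QuotientAddGroup.mk_surjective b
    rw [hπ, QuotientAddGroup.map_mk, QuotientAddGroup.eq_zero_iff] at hb
    obtain ⟨h, hhH, hh2⟩ := hb
    refine ⟨QuotientAddGroup.mk (x - h.1), ?_⟩
    rw [hf, QuotientAddGroup.map_mk]
    rw [QuotientAddGroup.eq]
    have : -(AddMonoidHom.inl ↥(P p) Q (x - h.1)) + (x, q) = h := by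
      obtain ⟨h1, h2⟩ := h
      simp only [AddMonoidHom.inl_apply] at hh2 ⊢
      obtain rfl : h2 = q := hh2
      rw [Prod.ext_iff]
      constructor
      · show -(x - h1) + x = h1
        abel
      · show -0 + h2 = h2
        simp
    rw [this]
    exact hhH
  obtain ⟨s₁, ⟨e₁⟩⟩ := quot_single p H₁
  obtain ⟨s₂, ⟨e₂⟩⟩ := hQ H₂
  set f' : (Fin s₁ → ↥(P p)) →+ ((↥(P p) × Q) ⧸ H) :=
    f.comp e₁.symm.toAddMonoidHom with hf'
  have hf'_inj : Function.Injective f' := hf_inj.comp e₁.symm.injective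
  haveI : Module.Injective ℤ (Fin s₁ → ↥(P p)) :=
    (Module.Baer.of_divisible _).injective
  obtain ⟨ρ, hρ⟩ := Module.Injective.out f'.toIntLinearMap hf'_inj LinearMap.id
  have hπf' : ∀ z, π (f' z) = 0 := fun z => hπf _
  set Φ : ((↥(P p) × Q) ⧸ H) →+ ((Fin s₁ → ↥(P p)) × (Q ⧸ H₂)) :=
    (ρ.toAddMonoidHom).prod π with hΦ
  have hΦ_bij : Function.Bijective Φ := by
    constructor
    · rw [injective_iff_map_eq_zero]
      intro b hb
      rw [hΦ, Prod.ext_iff] at hb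
      obtain ⟨hb1, hb2⟩ := hb
      obtain ⟨x, rfl⟩ := hker b hb2
      obtain ⟨y, rfl⟩ : ∃ y, e₁.symm y = x := ⟨e₁ x, e₁.symm_apply_apply x⟩
      have : f (e₁.symm y) = f' y := rfl
      rw [this] at hb1 ⊢
      have hy : ρ (f' y) = y := hρ y
      rw [show (ρ.toAddMonoidHom.prod π (f' y)).1 = ρ (f' y) from rfl] at hb1
      rw [hy] at hb1
      rw [hb1]
      exact map_zero f'
    · rintro ⟨u, v⟩
      obtain ⟨b₀, hb₀⟩ := hπ_surj v
      refine ⟨b₀ + f' (u - ρ b₀), ?_⟩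
      have h1 : ρ (b₀ + f' (u - ρ b₀)) = u := by
        rw [map_add, show ρ (f' (u - ρ b₀)) = u - ρ b₀ from hρ _]
        abel
      have h2 : π (b₀ + f' (u - ρ b₀)) = v := by
        rw [map_add, hπf', add_zero, hb₀]
      rw [hΦ]
      rw [Prod.ext_iff]
      exact ⟨h1, h2⟩
  exact ⟨s₁ + s₂,
    ⟨(AddEquiv.ofBijective Φ hΦ_bij).trans
      ((AddEquiv.prodCongr (AddEquiv.refl _) e₂).trans (finCombine s₁ s₂ _))⟩⟩

/-- Every quotient of a finite power of the Prüfer group is a finite power of the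
Prüfer group. -/
lemma quot_pow (r : ℕ) (H : AddSubgroup (Fin r → ↥(P p))) :
    ∃ s, Nonempty (((Fin r → ↥(P p)) ⧸ H) ≃+ (Fin s → ↥(P p))) := by
  induction r with
  | zero =>
    haveI : Subsingleton ((Fin 0 → ↥(P p)) ⧸ H) :=
      QuotientAddGroup.mk_surjective.subsingleton
    haveI : Unique ((Fin 0 → ↥(P p)) ⧸ H) := uniqueOfSubsingleton 0
    exact ⟨0, ⟨AddEquiv.ofUnique⟩⟩
  | succ r ih =>
    set ep : (Fin (r+1) → ↥(P p)) ≃+ (↥(P p) × (Fin r → ↥(P p))) :=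
      AddEquiv.mk' (Fin.consEquiv (fun _ : Fin (r+1) => ↥(P p))).symm (fun _ _ => rfl) with hep
    obtain ⟨s, ⟨e⟩⟩ := quot_prod p (Fin r → ↥(P p)) ih (H.map ep.toAddMonoidHom)
    exact ⟨s, ⟨(QuotientAddGroup.congr H (H.map ep.toAddMonoidHom) ep rfl).trans e⟩⟩

end PruferAux

section Assembly

open PruferAux

variable (p : ℕ) [Fact p.Prime]

/-- Every quotient of a finite power of the (multiplicative) Prüfer group is again such. -/
lemma quot_pow_mul (r : ℕ) (K : Subgroup (Fin r → Prufer p)) :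
    ∃ s, Nonempty (((Fin r → Prufer p) ⧸ K) ≃* (Fin s → Prufer p)) := by
  classical
  set μ : (Fin r → Prufer p) ≃* Multiplicative (Fin r → ↥(P p)) :=
    (MulEquiv.piMultiplicative (fun _ : Fin r => ↥(P p))).symm with hμ
  set K' : Subgroup (Multiplicative (Fin r → ↥(P p))) := K.map μ.toMonoidHom with hK'
  have e1 : ((Fin r → Prufer p) ⧸ K) ≃* (Multiplicative (Fin r → ↥(P p)) ⧸ K') :=
    QuotientGroup.congr K K' μ rfl
  set K'' : AddSubgroup (Fin r → ↥(P p)) := Subgroup.toAddSubgroup' K' with hK''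
  set h : Multiplicative (Fin r → ↥(P p)) →* Multiplicative ((Fin r → ↥(P p)) ⧸ K'') :=
    AddMonoidHom.toMultiplicative (QuotientAddGroup.mk' K'') with hh
  have hker : h.ker = K' := by
    ext x
    rw [MonoidHom.mem_ker]
    show (QuotientAddGroup.mk' K'') x.toAdd = 0 ↔ x ∈ K'
    rw [QuotientAddGroup.mk'_apply, QuotientAddGroup.eq_zero_iff]
    rfl
  have hsurj : Function.Surjective h := fun y => by
    obtain ⟨z, hz⟩ := QuotientAddGroup.mk_surjective y.toAdd
    exact ⟨Multiplicative.ofAdd z, by simpa [hh] using congrArg Multiplicative.ofAdd hz⟩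
  have e2 : (Multiplicative (Fin r → ↥(P p)) ⧸ K') ≃* Multiplicative ((Fin r → ↥(P p)) ⧸ K'') :=
    (QuotientGroup.quotientMulEquivOfEq hker.symm).trans
      (QuotientGroup.quotientKerEquivOfSurjective h hsurj)
  obtain ⟨s, ⟨e3⟩⟩ := quot_pow p r K''
  refine ⟨s, ⟨e1.trans (e2.trans ((AddEquiv.toMultiplicative e3).trans
    (MulEquiv.piMultiplicative (fun _ : Fin s => ↥(P p)))))⟩⟩

end Assembly

/-- Every quotient group of a discrete `p`-toral group is discrete `p`-toral. -/
theorem isDiscretePToral_quotient (p : ℕ) [Fact p.Prime] (S : Type*) [Group S]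
    (hS : IsDiscretePToral p S) (N : Subgroup S) [N.Normal] :
    IsDiscretePToral p (S ⧸ N) := by
  classical
  obtain ⟨S₀, hN₀, ⟨r, ⟨eS₀⟩⟩, hfin, hpg⟩ := hS
  haveI := hN₀
  set mk : S →* S ⧸ N := QuotientGroup.mk' N with hmk
  set T : Subgroup (S ⧸ N) := S₀.map mk with hT
  haveI hTnorm : T.Normal := hN₀.map mk (QuotientGroup.mk'_surjective N)
  -- the torus of the quotient
  set f : S₀ →* S ⧸ N := mk.comp S₀.subtype with hff
  have hrange : f.range = T := by
    rw [hff, MonoidHom.range_comp, Subgroup.range_subtype]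
  have htorus : ∃ s : ℕ, Nonempty (T ≃* (Fin s → Prufer p)) := by
    have e_range : S₀ ⧸ f.ker ≃* f.range := QuotientGroup.quotientKerEquivRange f
    have e_congr : (S₀ ⧸ f.ker) ≃* ((Fin r → Prufer p) ⧸ (f.ker.map eS₀.toMonoidHom)) :=
      QuotientGroup.congr f.ker (f.ker.map eS₀.toMonoidHom) eS₀ rfl
    obtain ⟨s, ⟨e⟩⟩ := quot_pow_mul p r (f.ker.map eS₀.toMonoidHom)
    exact ⟨s, ⟨(((MulEquiv.subgroupCongr hrange).symm.trans e_range.symm).trans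
      e_congr).trans e⟩⟩
  -- the quotient by the torus
  set M : Subgroup S := S₀ ⊔ N with hM
  haveI hMnorm : M.Normal := Subgroup.sup_normal S₀ N
  have hmap : M.map mk = T := by
    rw [hM, Subgroup.map_sup, show N.map mk = ⊥ from
      (Subgroup.map_eq_bot_iff N).2 (le_of_eq (QuotientGroup.ker_mk' N).symm), sup_bot_eq]
  haveI : (M.map mk).Normal := Subgroup.Normal.map hMnorm mk (QuotientGroup.mk'_surjective N)
  have E : ((S ⧸ N) ⧸ T) ≃* (S ⧸ M) :=
    (QuotientGroup.quotientMulEquivOfEq hmap.symm).trans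
      (QuotientGroup.quotientQuotientEquivQuotient N M le_sup_right)
  set φ : (S ⧸ S₀) →* (S ⧸ M) := QuotientGroup.map S₀ M (MonoidHom.id S) le_sup_left with hφ
  have hφsurj : Function.Surjective φ := by
    intro x
    obtain ⟨y, rfl⟩ := QuotientGroup.mk_surjective x
    exact ⟨QuotientGroup.mk y, rfl⟩
  set ψ : (S ⧸ S₀) →* ((S ⧸ N) ⧸ T) := E.symm.toMonoidHom.comp φ with hψ
  have hψsurj : Function.Surjective ψ := E.symm.surjective.comp hφsurj
  exact ⟨T, hTnorm, htorus, Finite.of_surjective ψ hψsurj, hpg.of_surjective ψ hψsurj⟩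
end

section
/- Let S be a discrete p-toral group with identity component S₀. Define inductively normal subgroups Z̃ₙ(S) by Z̃₀(S) = 1 and Z̃ₙ(S)/Z̃ₙ₋₁(S) = Ω₁(Z(S/Z̃ₙ₋₁(S))) (the subgroup of the center of S/Z̃ₙ₋₁(S) generated by elements of order dividing p). Set Z̃∞(S) = ⋃ₙ Z̃ₙ(S). Then Z̃∞(S) ⊇ S₀ and C_S(Z̃∞(S)) ≤ Z̃∞(S). -/
/-- `Ω₁(Z(G))`: the subgroup of the center of `G` generated by the elements `x`
with `x ^ p = 1`. -/
def omegaOneCenter (p : ℕ) (G : Type*) [Group G] : Subgroup G :=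
  Subgroup.closure {x : G | x ∈ Subgroup.center G ∧ x ^ p = 1}

theorem omegaOneCenter_le_center (p : ℕ) (G : Type*) [Group G] :
    omegaOneCenter p G ≤ Subgroup.center G :=
  (Subgroup.closure_le _).2 fun _ hx => hx.1

instance omegaOneCenter_normal (p : ℕ) (G : Type*) [Group G] :
    (omegaOneCenter p G).Normal := by
  constructor
  intro n hn g
  have hc := Subgroup.mem_center_iff.mp (omegaOneCenter_le_center p G hn) g
  rw [hc, mul_inv_cancel_right]
  exact hn

/-- The ascending chain `Z̃ₙ(S)`: `Z̃₀(S) = 1` and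
`Z̃ₙ(S)/Z̃ₙ₋₁(S) = Ω₁(Z(S/Z̃ₙ₋₁(S)))`, packaged with a proof of normality. -/
def ZtilAux (p : ℕ) (S : Type*) [Group S] : ℕ → {H : Subgroup S // H.Normal}
  | 0 => ⟨⊥, inferInstance⟩
  | n + 1 =>
    let Z := ZtilAux p S n
    haveI := Z.2
    ⟨(omegaOneCenter p (S ⧸ Z.1)).comap (QuotientGroup.mk' Z.1),
      Subgroup.Normal.comap (omegaOneCenter_normal p _) _⟩

/-- `Z̃ₙ(S)`, as a subgroup of `S`. -/
def Ztil (p : ℕ) (S : Type*) [Group S] (n : ℕ) : Subgroup S := (ZtilAux p S n).1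


set_option linter.unusedSectionVars false
set_option maxHeartbeats 1000000

section Basic
variable (p : ℕ) {S : Type*} [Group S]

instance Ztil_normal (n : ℕ) : (Ztil p S n).Normal := (ZtilAux p S n).2

theorem Ztil_zero : Ztil p S 0 = ⊥ := rfl

theorem Ztil_succ (n : ℕ) : Ztil p S (n + 1) =
    (omegaOneCenter p (S ⧸ Ztil p S n)).comap (QuotientGroup.mk' (Ztil p S n)) := rfl

theorem Ztil_le_succ (n : ℕ) : Ztil p S n ≤ Ztil p S (n + 1) := by
  intro x hx
  rw [Ztil_succ, Subgroup.mem_comap]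
  have : QuotientGroup.mk' (Ztil p S n) x = 1 := (QuotientGroup.eq_one_iff x).2 hx
  rw [this]
  exact Subgroup.one_mem _

theorem Ztil_mono : Monotone (Ztil p S) := monotone_nat_of_le_succ (Ztil_le_succ p)

theorem mem_iSup_Ztil {x : S} : x ∈ (⨆ n, Ztil p S n) ↔ ∃ n, x ∈ Ztil p S n :=
  Subgroup.mem_iSup_of_directed (Ztil_mono p).directed_le

theorem iSup_Ztil_normal : (⨆ n, Ztil p S n).Normal := by
  constructor
  intro x hx g
  rw [mem_iSup_Ztil] at hx ⊢
  obtain ⟨n, hn⟩ := hx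
  exact ⟨n, (Ztil_normal p n).conj_mem x hn g⟩

theorem map_omegaOneCenter_le {G H : Type*} [Group G] [Group H] (f : G →* H)
    (hf : Function.Surjective f) : (omegaOneCenter p G).map f ≤ omegaOneCenter p H := by
  rw [omegaOneCenter, MonoidHom.map_closure]
  apply Subgroup.closure_le _ |>.2
  rintro y ⟨x, ⟨hxc, hxp⟩, rfl⟩
  apply Subgroup.subset_closure
  refine ⟨Subgroup.mem_center_iff.2 fun h => ?_, by rw [← map_pow, hxp, map_one]⟩
  obtain ⟨g, rfl⟩ := hf h
  rw [← map_mul, ← map_mul, Subgroup.mem_center_iff.1 hxc g]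

end Basic
section Key
variable (p : ℕ) {S : Type*} [Group S]

theorem comap_Ztil_quotient_le {A : Subgroup S} [hAn : A.Normal] {j : ℕ}
    (hA : A ≤ Ztil p S j) (m : ℕ) :
    (Ztil p (S ⧸ A) m).comap (QuotientGroup.mk' A) ≤ Ztil p S (j + m) := by
  induction m with
  | zero =>
    intro x hx
    rw [Ztil_zero, Subgroup.mem_comap, Subgroup.mem_bot] at hx
    exact Nat.add_zero j ▸ hA ((QuotientGroup.eq_one_iff x).1 hx)
  | succ m ih =>
    set Z' := Ztil p S (j + m) with hZ'
    have hAZ' : ∀ a ∈ A, QuotientGroup.mk' Z' a = 1 := fun a ha =>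
      (QuotientGroup.eq_one_iff a).2 (Ztil_mono p (Nat.le_add_right j m) (hA ha))
    set f : S ⧸ A →* S ⧸ Z' := QuotientGroup.lift A (QuotientGroup.mk' Z') hAZ' with hf
    have hfK : ∀ y ∈ Ztil p (S ⧸ A) m, f y = 1 := by
      intro y hy
      obtain ⟨x, rfl⟩ := QuotientGroup.mk'_surjective A y
      exact (QuotientGroup.eq_one_iff x).2 (ih (Subgroup.mem_comap.2 hy))
    set ψ : (S ⧸ A) ⧸ (Ztil p (S ⧸ A) m) →* S ⧸ Z' :=
      QuotientGroup.lift _ f hfK with hψ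
    have hψsurj : Function.Surjective ψ := by
      intro y
      obtain ⟨x, rfl⟩ := QuotientGroup.mk'_surjective Z' y
      exact ⟨QuotientGroup.mk (QuotientGroup.mk x), rfl⟩
    intro x hx
    rw [Subgroup.mem_comap, Ztil_succ, Subgroup.mem_comap] at hx
    have h2 : ψ (QuotientGroup.mk' (Ztil p (S ⧸ A) m) (QuotientGroup.mk' A x))
        ∈ omegaOneCenter p (S ⧸ Z') :=
      map_omegaOneCenter_le p ψ hψsurj (Subgroup.mem_map_of_mem ψ hx)
    have h3 : ψ (QuotientGroup.mk' (Ztil p (S ⧸ A) m) (QuotientGroup.mk' A x))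
        = QuotientGroup.mk' Z' x := rfl
    rw [h3] at h2
    show x ∈ Ztil p S (j + m + 1)
    rw [Ztil_succ, Subgroup.mem_comap]
    exact h2

end Key
section FP
variable (p : ℕ) [Fact p.Prime] {S : Type*} [Group S]

theorem exists_central_ptorsion (hS : IsPGroup p S) (N : Subgroup S) [hNn : N.Normal]
    (hNfin : Finite N) (hN : N ≠ ⊥) :
    ∃ a : S, a ∈ N ∧ a ∈ Subgroup.center S ∧ a ^ p = 1 ∧ a ≠ 1 := by
  letI : MulAction S ↥N := MulAction.compHom ↥N (MulAut.conjNormal : S →* MulAut ↥N)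
  have hsmul : ∀ (s : S) (a : ↥N), ((s • a : ↥N) : S) = s * a * s⁻¹ := fun s a =>
    MulAut.conjNormal_apply s a
  have hNp : IsPGroup p ↥N := hS.to_subgroup N
  have hdvd : p ∣ Nat.card ↥N := by
    rcases hNp.card_eq_or_dvd with h | h
    · exact absurd (Subgroup.eq_bot_of_card_eq N h) hN
    · exact h
  have h1 : (1 : ↥N) ∈ MulAction.fixedPoints S ↥N := by
    intro s
    ext
    rw [hsmul]
    simp
  haveI := hNfin
  obtain ⟨b, hbfix, hb1⟩ := hS.exists_fixed_point_of_prime_dvd_card_of_fixed_point (α := ↥N) hdvd h1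
  -- b : ↥N, central
  have hbc : (b : S) ∈ Subgroup.center S := by
    rw [Subgroup.mem_center_iff]
    intro g
    have := congrArg (Subtype.val) (hbfix g)
    rw [hsmul] at this
    calc g * b = (g * b * g⁻¹) * g := by group
    _ = b * g := by rw [this]
  have hbne : (b : S) ≠ 1 := by
    intro h
    exact hb1 (Subtype.ext (h.trans rfl)).symm
  -- minimal p-power killing b
  obtain ⟨k, hk⟩ := hS (b : S)
  have hex : ∃ k, (b : S) ^ p ^ k = 1 := ⟨k, hk⟩
  classical
  let k0 := Nat.find hex
  have hk0 : (b : S) ^ p ^ k0 = 1 := Nat.find_spec hex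
  have hk0pos : 0 < k0 := by
    rcases Nat.eq_zero_or_pos k0 with h | h
    · exfalso; apply hbne; have := hk0; rw [h, pow_zero, pow_one] at this; exact this
    · exact h
  refine ⟨(b : S) ^ p ^ (k0 - 1), N.pow_mem b.2 _, Subgroup.pow_mem _ hbc _, ?_, ?_⟩
  · rw [← pow_mul, ← pow_succ, Nat.sub_add_cancel hk0pos]
    exact hk0
  · exact Nat.find_min hex (Nat.sub_lt hk0pos one_pos)

end FP

universe u

theorem finite_normal_le_Ztil (p : ℕ) [Fact p.Prime] :
    ∀ (c : ℕ) {S : Type u} [Group S], IsPGroup p S → ∀ (N : Subgroup S), N.Normal →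
      Finite N → Nat.card N = c → ∃ m, N ≤ Ztil p S m := by
  intro c
  induction c using Nat.strong_induction_on with
  | _ c ih =>
    intro S _ hS N hNn hNfin hcard
    by_cases hbot : N = ⊥
    · exact ⟨0, by rw [hbot, Ztil_zero]⟩
    haveI := hNn
    haveI := hNfin
    obtain ⟨a, haN, hac, hap, hane⟩ := exists_central_ptorsion p hS N hNfin hbot
    set A := Subgroup.closure {a} with hAdef
    have haA : a ∈ A := Subgroup.subset_closure rfl
    have hAle : A ≤ N := (Subgroup.closure_le N).2 (by simpa using haN)
    have hAc : A ≤ Subgroup.center S := (Subgroup.closure_le _).2 (by simpa using hac)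
    haveI hAn : A.Normal := ⟨fun x hx g => by
      rw [Subgroup.mem_center_iff.1 (hAc hx) g, mul_inv_cancel_right]; exact hx⟩
    have hA1 : A ≤ Ztil p S 1 := by
      apply (Subgroup.closure_le _).2
      intro x hx
      rw [Set.mem_singleton_iff] at hx; subst hx
      show x ∈ Ztil p S 1
      have hz1 : Ztil p S 1 =
          (omegaOneCenter p (S ⧸ Ztil p S 0)).comap (QuotientGroup.mk' (Ztil p S 0)) :=
        Ztil_succ p 0
      rw [hz1, Subgroup.mem_comap]
      apply Subgroup.subset_closure
      constructor
      · rw [Subgroup.mem_center_iff]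
        intro g
        obtain ⟨s, rfl⟩ := QuotientGroup.mk'_surjective _ g
        rw [← map_mul, ← map_mul, Subgroup.mem_center_iff.1 hac s]
      · rw [← map_pow, hap, map_one]
    set π := QuotientGroup.mk' A with hπ
    set N' := N.map π with hN'
    haveI hN'n : N'.Normal := hNn.map π (QuotientGroup.mk'_surjective A)
    set g : ↥N → ↥N' := fun x => ⟨π x, Subgroup.mem_map_of_mem π x.2⟩ with hg
    have hgsurj : Function.Surjective g := by
      rintro ⟨y, hy⟩
      obtain ⟨x, hx, rfl⟩ := hy
      exact ⟨⟨x, hx⟩, rfl⟩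
    haveI hN'fin : Finite ↥N' := Finite.of_surjective _ hgsurj
    have hcard' : Nat.card ↥N' < c := by
      rw [← hcard]
      rcases lt_or_eq_of_le (Nat.card_le_card_of_surjective g hgsurj) with h | h
      · exact h
      · exfalso
        have hbij : Function.Bijective g :=
          (Nat.bijective_iff_surjective_and_card g).2 ⟨hgsurj, h.symm⟩
        have h1 : g ⟨a, haN⟩ = g 1 := by
          apply Subtype.ext
          show π a = π 1
          rw [map_one]
          exact (QuotientGroup.eq_one_iff a).2 haA
        exact hane (congrArg Subtype.val (hbij.1 h1))
    obtain ⟨m, hm⟩ := ih _ hcard' (hS.to_quotient A) N' hN'n hN'fin rfl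
    refine ⟨1 + m, ?_⟩
    have hNle : N ≤ N'.comap π := fun x hx => Subgroup.mem_comap.2 (Subgroup.mem_map_of_mem π hx)
    exact le_trans (le_trans hNle (Subgroup.comap_mono hm)) (comap_Ztil_quotient_le p hA1 m)


section PG
variable (p : ℕ) [Fact p.Prime]

theorem isPGroup_prufer : IsPGroup p (Prufer p) := by
  intro g
  obtain ⟨n, hn⟩ := (Multiplicative.toAdd g).2
  refine ⟨n, ?_⟩
  have h0 : p ^ n • ((Multiplicative.toAdd g : AddCommGroup.primaryComponent QmodZ p) : QmodZ)
      = 0 := hn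
  have : p ^ n • (Multiplicative.toAdd g) = 0 := by
    apply Subtype.ext
    simpa using h0
  show Multiplicative.toAdd (g ^ p ^ n) = 0
  exact this

theorem isPGroup_pi {r : ℕ} : IsPGroup p (Fin r → Prufer p) := by
  intro v
  classical
  choose k hk using fun i => isPGroup_prufer p (v i)
  refine ⟨Finset.univ.sup k, ?_⟩
  funext i
  have hle : p ^ k i ∣ p ^ Finset.univ.sup k :=
    pow_dvd_pow p (Finset.le_sup (Finset.mem_univ i))
  obtain ⟨c, hc⟩ := hle
  show (v i) ^ p ^ Finset.univ.sup k = 1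
  rw [hc, pow_mul, hk i, one_pow]

theorem isPGroup_of_extension {S : Type*} [Group S] (S₀ : Subgroup S) [S₀.Normal]
    (h0 : IsPGroup p S₀) (hq : IsPGroup p (S ⧸ S₀)) : IsPGroup p S := by
  intro g
  obtain ⟨k, hk⟩ := hq (QuotientGroup.mk g)
  have hgk : g ^ p ^ k ∈ S₀ := by
    rw [← QuotientGroup.eq_one_iff]
    simpa using hk
  obtain ⟨j, hj⟩ := h0 ⟨g ^ p ^ k, hgk⟩
  refine ⟨k + j, ?_⟩
  have := congrArg Subtype.val hj
  rw [SubmonoidClass.coe_pow] at this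
  rw [pow_add, pow_mul]
  exact this

end PG

theorem finite_torsion_qmodz (q : ℕ) (hq : 0 < q) :
    Set.Finite {x : QmodZ | q • x = 0} := by
  have hq0 : (q : ℚ) ≠ 0 := by exact_mod_cast hq.ne'
  have hsub : {x : QmodZ | q • x = 0} ⊆
      Set.range (fun k : Fin q => (QuotientAddGroup.mk ((k : ℚ) / q) : QmodZ)) := by
    rintro x hx
    obtain ⟨r, rfl⟩ := QuotientAddGroup.mk_surjective x
    have hx' : (q • r : ℚ) ∈ AddSubgroup.zmultiples (1 : ℚ) := by
      rwa [Set.mem_setOf_eq, ← QuotientAddGroup.mk_nsmul, QuotientAddGroup.eq_zero_iff] at hx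
    obtain ⟨t, ht⟩ := AddSubgroup.mem_zmultiples_iff.mp hx'
    have hqr : (q : ℚ) * r = t := by
      push_cast [zsmul_eq_mul, nsmul_eq_mul] at ht
      linarith
    have hr : r = (t : ℚ) / q := by
      rw [eq_div_iff hq0]; linarith
    have h1 : 0 ≤ t % q := Int.emod_nonneg t (by exact_mod_cast hq.ne')
    have h2 : t % q < q := Int.emod_lt_of_pos t (by exact_mod_cast hq)
    have key : (((t % q).toNat : ℚ)) = ((t % q : ℤ) : ℚ) := by
      have h3 : ((t % q).toNat : ℤ) = t % q := Int.toNat_of_nonneg h1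
      exact_mod_cast congrArg (fun z : ℤ => (z : ℚ)) h3
    refine ⟨⟨(t % q).toNat, by omega⟩, ?_⟩
    show QuotientAddGroup.mk _ = QuotientAddGroup.mk r
    rw [QuotientAddGroup.eq]
    refine AddSubgroup.mem_zmultiples_iff.mpr ⟨t / q, ?_⟩
    have hdivcast : ((t / q : ℤ) : ℚ) * q = (t : ℚ) - ((t % q : ℤ) : ℚ) := by
      have h := Int.mul_ediv_add_emod t q
      have : ((q * (t / q) + t % q : ℤ) : ℚ) = (t : ℚ) := by rw [h]
      push_cast at this
      linarith
    have hval : ((t / q : ℤ) : ℚ) = ((t : ℚ) - ((t % q : ℤ) : ℚ)) / q := by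
      rw [eq_div_iff hq0, hdivcast]
    rw [zsmul_eq_mul, mul_one, hr]
    push_cast [hval]
    rw [key]
    ring
  exact Set.Finite.subset (Set.finite_range _) hsub

theorem finite_torsion_prufer (p : ℕ) [Fact p.Prime] (q : ℕ) (hq : 0 < q) :
    Finite {u : Prufer p // u ^ q = 1} := by
  have : Finite {x : QmodZ | q • x = 0} := (finite_torsion_qmodz q hq).to_subtype
  refine Finite.of_injective (fun u =>
    (⟨((Multiplicative.toAdd u.1 : AddCommGroup.primaryComponent QmodZ p) : QmodZ), ?_⟩ :
      {x : QmodZ | q • x = 0})) ?_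
  · obtain ⟨u, hu⟩ := u
    have h1 : q • (Multiplicative.toAdd u) = 0 := by
      exact congrArg Multiplicative.toAdd hu
    have h2 := congrArg (Subtype.val) h1
    simpa using h2
  · rintro ⟨u, hu⟩ ⟨v, hv⟩ h
    simp only [Subtype.mk.injEq] at h
    exact Subtype.ext (Multiplicative.toAdd.injective (Subtype.ext h))

theorem finite_torsion_pi (p : ℕ) [Fact p.Prime] (r q : ℕ) (hq : 0 < q) :
    Finite {v : Fin r → Prufer p // v ^ q = 1} := by
  haveI := finite_torsion_prufer p q hq
  refine Finite.of_injective (fun v i => (⟨v.1 i, ?_⟩ : {u : Prufer p // u ^ q = 1})) ?_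
  · have := congrFun v.2 i
    simpa using this
  · rintro ⟨u, hu⟩ ⟨v, hv⟩ h
    refine Subtype.ext (funext fun i => ?_)
    exact congrArg Subtype.val (congrFun h i)


/-- Let `S` be a discrete `p`-toral group with identity component `S₀`. Then
`Z̃∞(S) = ⋃ₙ Z̃ₙ(S)` contains `S₀` and contains its own centralizer. -/
theorem Ztil_infty_ge_component_and_self_centralizing
    (p : ℕ) [Fact p.Prime] (S : Type*) [Group S]
    (S₀ : Subgroup S) (hnorm : S₀.Normal)
    (hconn : ∃ r : ℕ, Nonempty (S₀ ≃* (Fin r → Prufer p)))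
    (hfin : Finite (S ⧸ S₀)) (hpg : IsPGroup p (S ⧸ S₀)) :
    S₀ ≤ (⨆ n, Ztil p S n) ∧
      Subgroup.centralizer ((⨆ n, Ztil p S n : Subgroup S) : Set S) ≤ ⨆ n, Ztil p S n := by
  classical
  obtain ⟨r, ⟨e⟩⟩ := hconn
  haveI := hnorm
  have hS₀p : IsPGroup p ↥S₀ := (isPGroup_pi p).of_equiv e.symm
  have hSp : IsPGroup p S := isPGroup_of_extension p S₀ hS₀p hpg
  have hcomm : ∀ x ∈ S₀, ∀ y ∈ S₀, x * y = y * x := by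
    intro x hx y hy
    have h : e (⟨x, hx⟩ * ⟨y, hy⟩) = e (⟨y, hy⟩ * ⟨x, hx⟩) := by
      rw [map_mul, map_mul, mul_comm]
    exact congrArg Subtype.val (e.injective h)
  set W := (⨆ n, Ztil p S n : Subgroup S) with hWdef
  haveI hWn : W.Normal := iSup_Ztil_normal p
  have hpart1 : S₀ ≤ W := by
    intro x hx
    obtain ⟨k, hk⟩ := hS₀p ⟨x, hx⟩
    have hxq : x ^ p ^ k = 1 := by simpa using congrArg Subtype.val hk
    set q := p ^ k with hqdef
    have hq : 0 < q := pow_pos (Fact.out (p := p.Prime)).pos k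
    set Ω : Subgroup S :=
      { carrier := {y | y ∈ S₀ ∧ y ^ q = 1}
        one_mem' := ⟨S₀.one_mem, one_pow q⟩
        mul_mem' := by
          rintro a b ⟨haS, haq⟩ ⟨hbS, hbq⟩
          refine ⟨S₀.mul_mem haS hbS, ?_⟩
          have hab : Commute a b := hcomm a haS b hbS
          rw [hab.mul_pow, haq, hbq, one_mul]
        inv_mem' := by
          rintro a ⟨haS, haq⟩
          exact ⟨S₀.inv_mem haS, by rw [inv_pow, haq, inv_one]⟩ } with hΩdef
    have hΩn : Ω.Normal := by
      constructor
      rintro y ⟨hyS, hyq⟩ g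
      refine ⟨hnorm.conj_mem y hyS g, ?_⟩
      rw [conj_pow, hyq, mul_one, mul_inv_cancel]
    have hΩfin : Finite ↥Ω := by
      haveI := finite_torsion_pi p r q hq
      refine Finite.of_injective (fun y =>
        (⟨e ⟨y.1, y.2.1⟩, ?_⟩ : {v : Fin r → Prufer p // v ^ q = 1})) ?_
      · rw [← map_pow]
        have h1 : (⟨y.1, y.2.1⟩ : S₀) ^ q = 1 := by
          apply Subtype.ext
          show y.1 ^ q = 1
          exact y.2.2
        rw [h1, map_one]
      · rintro ⟨u, hu⟩ ⟨v, hv⟩ h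
        simp only [Subtype.mk.injEq] at h
        have h2 : (⟨u, hu.1⟩ : S₀) = ⟨v, hv.1⟩ := e.injective h
        have h3 : u = v := congrArg (fun w : ↥S₀ => (w : S)) h2
        exact Subtype.ext h3
    obtain ⟨m, hm⟩ := finite_normal_le_Ztil p (Nat.card ↥Ω) hSp Ω hΩn hΩfin rfl
    exact (mem_iSup_Ztil p).2 ⟨m, hm ⟨hx, hxq⟩⟩
  refine ⟨hpart1, ?_⟩
  set C := Subgroup.centralizer (W : Set S) with hCdef
  have hCn : C.Normal := by
    constructor
    intro n hn g
    rw [Subgroup.mem_centralizer_iff] at hn ⊢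
    intro h hh
    have h1 : g⁻¹ * h * g ∈ W := by
      have := hWn.conj_mem h hh g⁻¹
      simpa using this
    have h2 := hn _ h1
    calc h * (g * n * g⁻¹) = g * ((g⁻¹ * h * g) * n) * g⁻¹ := by group
    _ = g * (n * (g⁻¹ * h * g)) * g⁻¹ := by rw [h2]
    _ = g * n * g⁻¹ * h := by group
  haveI hfinQ : Finite (S ⧸ W) := by
    refine Finite.of_surjective
      (QuotientGroup.map S₀ W (MonoidHom.id S) (fun x hx => hpart1 hx)) ?_
    intro y
    obtain ⟨x, rfl⟩ := QuotientGroup.mk'_surjective W y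
    exact ⟨QuotientGroup.mk x, QuotientGroup.map_mk _ _ _ _ x⟩
  have hQp : IsPGroup p (S ⧸ W) := hSp.to_quotient W
  intro c0 hc0
  by_contra hc0W
  set mkW := QuotientGroup.mk' W with hmkW
  set Cb := C.map mkW with hCb
  haveI hCbn : Cb.Normal := hCn.map mkW (QuotientGroup.mk'_surjective W)
  have hCbne : Cb ≠ ⊥ := by
    intro h
    have hmem : mkW c0 ∈ Cb := Subgroup.mem_map_of_mem _ hc0
    rw [h, Subgroup.mem_bot] at hmem
    exact hc0W ((QuotientGroup.eq_one_iff c0).1 hmem)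
  obtain ⟨ab, habC, habc, habp, habne⟩ :=
    exists_central_ptorsion p hQp Cb inferInstance hCbne
  obtain ⟨c, hcC, hcmk⟩ := habC
  have hcW : c ∉ W := by
    intro h
    apply habne
    rw [← hcmk]
    exact (QuotientGroup.eq_one_iff c).2 h
  have hcp : c ^ p ∈ W := by
    rw [← QuotientGroup.eq_one_iff]
    show mkW (c ^ p) = 1
    rw [map_pow, hcmk, habp]
  have hcomm2 : ∀ s : S, c⁻¹ * s⁻¹ * c * s ∈ W := by
    intro s
    have hcen := Subgroup.mem_center_iff.1 habc (mkW s)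
    rw [← hcmk, ← map_mul, ← map_mul] at hcen
    rw [QuotientGroup.mk'_eq_mk'] at hcen
    obtain ⟨z, hz, hzz⟩ := hcen
    have heq : c⁻¹ * s⁻¹ * c * s = z := by
      have : z = (s * c)⁻¹ * (c * s) := by rw [← hzz]; group
      rw [this]; group
    rw [heq]; exact hz
  haveI := Fintype.ofFinite (S ⧸ W)
  have hchoice : ∀ t : S ⧸ W, ∃ x : S × ℕ, (QuotientGroup.mk x.1 : S ⧸ W) = t ∧
      c⁻¹ * x.1⁻¹ * c * x.1 ∈ Ztil p S x.2 := by
    intro t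
    obtain ⟨rr, hrr⟩ := QuotientGroup.mk_surjective t
    obtain ⟨n1, hn1⟩ := (mem_iSup_Ztil p).1 (hcomm2 rr)
    exact ⟨(rr, n1), hrr, hn1⟩
  choose F hF1 hF2 using hchoice
  obtain ⟨n₀, hn₀⟩ := (mem_iSup_Ztil p).1 hcp
  set n := max n₀ (Finset.univ.sup (fun t => (F t).2)) with hn
  have hcpn : c ^ p ∈ Ztil p S n := Ztil_mono p (le_max_left _ _) hn₀
  have hall : ∀ s : S, c⁻¹ * s⁻¹ * c * s ∈ Ztil p S n := by
    intro s
    set t : S ⧸ W := QuotientGroup.mk s with ht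
    set rr : S := (F t).1 with hrr
    have hmkr : (QuotientGroup.mk rr : S ⧸ W) = QuotientGroup.mk s := hF1 t
    have hz : rr⁻¹ * s ∈ W := by
      have := hmkr
      rwa [QuotientGroup.eq] at this
    set z := rr⁻¹ * s with hzdef
    have hs : s = rr * z := by rw [hzdef]; group
    have hzc : z * c = c * z := Subgroup.mem_centralizer_iff.1 hcC z hz
    have hinv : c⁻¹ * z⁻¹ = z⁻¹ * c⁻¹ := by rw [← mul_inv_rev, ← mul_inv_rev, hzc]
    have key : c⁻¹ * s⁻¹ * c * s = z⁻¹ * (c⁻¹ * rr⁻¹ * c * rr) * z := by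
      rw [hs, mul_inv_rev]
      calc c⁻¹ * (z⁻¹ * rr⁻¹) * c * (rr * z)
          = (c⁻¹ * z⁻¹) * (rr⁻¹ * c * (rr * z)) := by group
        _ = (z⁻¹ * c⁻¹) * (rr⁻¹ * c * (rr * z)) := by rw [hinv]
        _ = z⁻¹ * (c⁻¹ * rr⁻¹ * c * rr) * z := by group
    rw [key]
    have hmem1 : c⁻¹ * rr⁻¹ * c * rr ∈ Ztil p S n :=
      Ztil_mono p (le_trans (Finset.le_sup (Finset.mem_univ t)) (le_max_right _ _)) (hF2 t)
    have hconj := (Ztil_normal p n).conj_mem _ hmem1 z⁻¹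
    simpa using hconj
  have hmem : c ∈ Ztil p S (n + 1) := by
    rw [Ztil_succ, Subgroup.mem_comap]
    apply Subgroup.subset_closure
    constructor
    · rw [Subgroup.mem_center_iff]
      intro g
      obtain ⟨s, rfl⟩ := QuotientGroup.mk'_surjective _ g
      rw [← map_mul, ← map_mul, QuotientGroup.mk'_eq_mk']
      exact ⟨c⁻¹ * s⁻¹ * c * s, hall s, by group⟩
    · rw [← map_pow]
      exact (QuotientGroup.eq_one_iff _).2 hcpn
  exact hcW ((mem_iSup_Ztil p).2 ⟨n + 1, hmem⟩)
end

section
/- Let Q ≤ P be discrete p-toral groups. Then Out_P(Q) := Aut_P(Q)/Inn(Q) is a finite p-group, where Aut_P(Q) is the group of automorphisms of Q induced by conjugation by elements of N_P(Q). -/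
/-- The inner automorphisms form a normal subgroup of `MulAut G`. -/
instance conj_range_normal (G : Type*) [Group G] :
    ((MulAut.conj : G →* MulAut G).range).Normal := by
  constructor
  rintro n ⟨g, rfl⟩ α
  refine ⟨α g, ?_⟩
  ext x
  simp [mul_assoc]

lemma prufer_isPGroup (p : ℕ) [Fact p.Prime] : IsPGroup p (Prufer p) := by
  intro g
  obtain ⟨n, hn⟩ := (Multiplicative.toAdd g).2
  refine ⟨n, ?_⟩
  have h0 : p ^ n • ((Multiplicative.toAdd g : AddCommGroup.primaryComponent QmodZ p) : QmodZ)
      = 0 := by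
    rw [← hn]
  have h1 : p ^ n • (Multiplicative.toAdd g) = 0 := by
    ext; simpa using h0
  have h2 : g ^ p ^ n = Multiplicative.ofAdd (p ^ n • Multiplicative.toAdd g) := rfl
  rw [h2, h1]; rfl

lemma pi_isPGroup {p : ℕ} [Fact p.Prime] {r : ℕ} {G : Fin r → Type*} [∀ i, Group (G i)]
    (h : ∀ i, IsPGroup p (G i)) : IsPGroup p (∀ i, G i) := by
  intro g
  choose k hk using fun i => h i (g i)
  refine ⟨∑ i, k i, ?_⟩
  funext i
  simp only [Pi.pow_apply, Pi.one_apply]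
  have : orderOf (g i) ∣ p ^ (∑ j, k j) := by
    refine dvd_trans (orderOf_dvd_of_pow_eq_one (hk i)) (pow_dvd_pow _ ?_)
    exact Finset.single_le_sum (fun _ _ => Nat.zero_le _) (Finset.mem_univ i)
  exact orderOf_dvd_iff_pow_eq_one.mp this

lemma isPGroup_of_normal {p : ℕ} {G : Type*} [Group G] (N : Subgroup G) [N.Normal]
    (hN : IsPGroup p N) (hQ : IsPGroup p (G ⧸ N)) : IsPGroup p G := by
  intro g
  obtain ⟨k, hk⟩ := hQ (QuotientGroup.mk g)
  have hmem : g ^ p ^ k ∈ N := by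
    rw [← QuotientGroup.eq_one_iff]
    simpa using hk
  obtain ⟨m, hm⟩ := hN ⟨g ^ p ^ k, hmem⟩
  refine ⟨k + m, ?_⟩
  have h2 : (g ^ p ^ k) ^ p ^ m = 1 := by
    have := congrArg (Subgroup.subtype N) hm
    simpa using this
  rw [pow_add, pow_mul]
  exact h2

lemma qmodz_torsion_finite (n : ℕ) (hn : 0 < n) : Finite {q : QmodZ // n • q = 0} := by
  have hnQ : (n : ℚ) ≠ 0 := by exact_mod_cast hn.ne'
  have hsurj : Function.Surjective (fun i : Fin n =>
      (⟨QuotientAddGroup.mk ((i : ℚ) / n), by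
        show n • (QuotientAddGroup.mk ((i : ℚ) / n) : QmodZ) = 0
        rw [← QuotientAddGroup.mk_nsmul]
        rw [show n • ((i : ℚ) / n) = ((i : ℚ)) by rw [nsmul_eq_mul]; field_simp]
        rw [QuotientAddGroup.eq_zero_iff]
        exact ⟨(i : ℤ), by push_cast; simp [zsmul_eq_mul]⟩⟩ : {q : QmodZ // n • q = 0})) := by
    rintro ⟨q, hq⟩
    obtain ⟨x, rfl⟩ := QuotientAddGroup.mk_surjective q
    have hx : n • (QuotientAddGroup.mk x : QmodZ) = 0 := hq
    rw [← QuotientAddGroup.mk_nsmul, QuotientAddGroup.eq_zero_iff] at hx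
    obtain ⟨k, hk⟩ := hx
    have hk' : (k : ℚ) = n * x := by
      have : k • (1 : ℚ) = n • x := hk
      push_cast at this
      simpa [zsmul_eq_mul, nsmul_eq_mul] using this
    have hxk : x = (k : ℚ) / n := by rw [hk']; field_simp
    have h1 : 0 ≤ k % (n : ℤ) := Int.emod_nonneg k (by exact_mod_cast hn.ne')
    have h2 : k % (n : ℤ) < n := Int.emod_lt_of_pos k (by exact_mod_cast hn)
    refine ⟨⟨(k % n).toNat, by omega⟩, ?_⟩
    ext
    show (QuotientAddGroup.mk _ : QmodZ) = QuotientAddGroup.mk x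
    rw [QuotientAddGroup.eq]
    refine ⟨k / n, ?_⟩
    have hcast : (((k % (n:ℤ)).toNat : ℚ)) = ((k % (n:ℤ) : ℤ) : ℚ) := by
      exact_mod_cast congrArg (Int.cast : ℤ → ℚ) (Int.toNat_of_nonneg h1)
    have hmod : ((k % n : ℤ) : ℚ) = (k : ℚ) - (k / n : ℤ) * n := by
      rw [Int.emod_def]; push_cast; ring
    rw [hxk]
    push_cast
    rw [hcast, hmod]
    simp only [zsmul_eq_mul, mul_one]
    field_simp
    ring
  exact Finite.of_surjective _ hsurj

lemma prufer_torsion_finite (p : ℕ) [Fact p.Prime] (n : ℕ) (hn : 0 < n) :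
    Finite {y : Prufer p // y ^ n = 1} := by
  have := qmodz_torsion_finite n hn
  refine Finite.of_injective (fun y => (⟨((Multiplicative.toAdd y.1 :
      AddCommGroup.primaryComponent QmodZ p) : QmodZ), ?_⟩ : {q : QmodZ // n • q = 0})) ?_
  · obtain ⟨y, hy⟩ := y
    have h2 : n • Multiplicative.toAdd y = 0 := by
      have : Multiplicative.toAdd (y ^ n) = 0 := by rw [hy]; rfl
      exact this
    have h3 := congrArg Subtype.val h2
    simpa using h3
  · intro a b h
    have h1 : ((Multiplicative.toAdd a.1 : AddCommGroup.primaryComponent QmodZ p) : QmodZ)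
        = ((Multiplicative.toAdd b.1 : AddCommGroup.primaryComponent QmodZ p) : QmodZ) :=
      congrArg (fun z : {q : QmodZ // n • q = 0} => z.1) h
    exact Subtype.ext (Multiplicative.toAdd.injective (Subtype.ext h1))

lemma pi_prufer_torsion_finite (p : ℕ) [Fact p.Prime] (r n : ℕ) (hn : 0 < n) :
    Finite {d : Fin r → Prufer p // d ^ n = 1} := by
  have := prufer_torsion_finite p n hn
  refine Finite.of_injective (fun d => (fun i => (⟨d.1 i, by
    have := congrFun d.2 i
    simpa using this⟩ : {y : Prufer p // y ^ n = 1}))) ?_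
  intro a b h
  apply Subtype.ext
  funext i
  exact congrArg Subtype.val (congrFun h i)

lemma range_finite_of_exponent {H M D : Type*} [Group H] [Group M] [CommGroup D]
    (j : H →* D) (hj : Function.Injective j)
    (hfinD : ∀ n : ℕ, 0 < n → Finite {d : D // d ^ n = 1})
    (htorD : ∀ x : D, ∃ n, 0 < n ∧ x ^ n = 1)
    (f : H →* M) (E : ℕ) (hE : 0 < E) (hf : ∀ x, f x ^ E = 1) :
    (Set.range f).Finite := by
  letI : CommGroup H := { (inferInstance : Group H) with
    mul_comm := fun a b => hj (by rw [map_mul, map_mul, mul_comm]) }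
  have htor : ∀ x : H, ∃ n, 0 < n ∧ x ^ n = 1 := fun x => by
    obtain ⟨n, hn, h1⟩ := htorD (j x)
    exact ⟨n, hn, hj (by rw [map_pow, h1, map_one])⟩
  haveI hfinH : Finite {x : H // x ^ E = 1} := by
    have := hfinD E hE
    exact Finite.of_injective
      (fun x => (⟨j x.1, by rw [← map_pow, x.2, map_one]⟩ : {d : D // d ^ E = 1}))
      (fun a b h => Subtype.ext (hj (congrArg Subtype.val h)))
  set M₀ := Nat.card {x : H // x ^ E = 1} with hM₀
  have key : ∀ s : Finset M, ↑s ⊆ Set.range f → s.card ≤ M₀ := by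
    intro s hs
    have hex : ∀ m : {m : M // m ∈ s}, ∃ x : H, f x = m := fun m => hs m.2
    choose g hg using hex
    haveI : Finite ↥(Set.range g) := (Set.finite_range g).to_subtype
    set B : Subgroup H := Subgroup.closure (Set.range g) with hB
    haveI hBfg : Group.FG B := Group.closure_finite_fg _
    haveI hBfin : Finite B := CommGroup.finite_of_fg_torsion (G := B) (fun x => by
      obtain ⟨n, hn, h1⟩ := htor x.1
      refine isOfFinOrder_iff_pow_eq_one.mpr ⟨n, hn, Subtype.ext ?_⟩
      simpa using h1)
    set f' : B →* M := f.comp B.subtype with hf'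
    have hsub : ↑s ⊆ Set.range f' := by
      intro m hm
      exact ⟨⟨g ⟨m, hm⟩, Subgroup.subset_closure ⟨_, rfl⟩⟩, hg ⟨m, hm⟩⟩
    set pE : B →* B := powMonoidHom E with hpE
    have hle : pE.range ≤ f'.ker := by
      rintro _ ⟨x, rfl⟩
      rw [MonoidHom.mem_ker]
      show f (((powMonoidHom E x : B) : H)) = 1
      have : ((powMonoidHom E x : B) : H) = (x : H) ^ E := rfl
      rw [this, map_pow]
      exact hf _
    haveI : Finite ↥(Set.range f') := (Set.finite_range f').to_subtype
    have c1 : s.card ≤ Nat.card (Set.range f') := by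
      have hinj : Function.Injective
          (fun m : {m : M // m ∈ s} => (⟨m.1, hsub m.2⟩ : Set.range f')) :=
        fun a b h => Subtype.ext (congrArg (fun z : ↥(Set.range ⇑f') => z.1) h)
      calc s.card = Nat.card {m : M // m ∈ s} := by
            simp [Nat.card_eq_fintype_card]
        _ ≤ _ := Nat.card_le_card_of_injective _ hinj
    have c2 : Nat.card (Set.range f') = f'.ker.index := by
      rw [Subgroup.index_ker f']
      apply Nat.card_congr
      exact Equiv.setCongr (by rw [MonoidHom.coe_range])
    have c3 : f'.ker.index ∣ pE.range.index := Subgroup.index_dvd_of_le hle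
    have c4 : pE.range.index = Nat.card pE.ker := by
      have h1 := Subgroup.card_mul_index pE.range
      have h3 := Subgroup.card_mul_index pE.ker
      have h2 := Subgroup.index_ker pE
      have hpos : 0 < Nat.card pE.range := Nat.card_pos
      rw [h2] at h3
      have : Nat.card pE.range * pE.range.index
          = Nat.card pE.range * Nat.card pE.ker := by
        rw [h1, ← h3]; ring
      exact Nat.eq_of_mul_eq_mul_left hpos this
    have c5 : Nat.card pE.ker ≤ M₀ := by
      refine Nat.card_le_card_of_injective
        (fun x => (⟨(x.1 : H), ?_⟩ : {x : H // x ^ E = 1})) ?_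
      · have hx : (x.1 : B) ^ E = 1 := x.2
        have := congrArg (Subgroup.subtype B) hx
        simpa using this
      · intro a b h
        exact Subtype.ext (Subtype.ext (congrArg (fun z : {x : H // x ^ E = 1} => z.1) h))
    have hkerpos : 0 < Nat.card pE.ker := Nat.card_pos
    have c6 : f'.ker.index ≤ Nat.card pE.ker := Nat.le_of_dvd (by rw [← c4] at hkerpos ⊢; omega) (c4 ▸ c3)
    omega
  rw [← Set.not_infinite]
  intro hinf
  obtain ⟨t, hts, htf, htc⟩ := hinf.exists_subset_ncard_eq (M₀ + 1)
  have hb := key htf.toFinset (by rwa [Set.Finite.coe_toFinset])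
  rw [Set.ncard_eq_toFinset_card _ htf] at htc
  omega

open scoped IsMulCommutative

lemma key_conj {P : Type*} [Group P] (S₀ Q : Subgroup P) [hN : S₀.Normal]
    (hcomm : ∀ x ∈ S₀, ∀ y ∈ S₀, x * y = y * x)
    (fQ : ↥Q →* P ⧸ S₀) (hfQ : fQ = (QuotientGroup.mk' S₀).comp Q.subtype)
    [Finite (↥Q ⧸ fQ.ker)]
    (E : ℕ) (hE : E = Nat.card (↥Q ⧸ fQ.ker))
    (t : P) (htN : t ∈ (Subgroup.normalizer (Q : Set P))) (htS : t ∈ S₀) :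
    ∃ z ∈ S₀ ⊓ Q, ∀ q ∈ Q, (z * t ^ E) * q = q * (z * t ^ E) := by
  classical
  letI : IsMulCommutative ↥(S₀ ⊓ Q) :=
    ⟨⟨fun a b => Subtype.ext (hcomm a.1 a.2.1 b.1 b.2.1)⟩⟩
  have hcS : ∀ q : ↥Q, (q : P)⁻¹ * t * q * t⁻¹ ∈ S₀ := by
    intro q
    have h1 : (q : P)⁻¹ * t * ((q : P)⁻¹)⁻¹ ∈ S₀ := hN.conj_mem t htS (q : P)⁻¹
    simp only [inv_inv] at h1
    exact mul_mem h1 (inv_mem htS)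
  have hcQ : ∀ q : ↥Q, (q : P)⁻¹ * t * q * t⁻¹ ∈ Q := by
    intro q
    have h1 : t * q * t⁻¹ ∈ Q := (Subgroup.mem_normalizer_iff.mp htN (q : P)).mp q.2
    have h2 : (q : P)⁻¹ * (t * q * t⁻¹) ∈ Q := mul_mem (inv_mem q.2) h1
    have h3 : (q : P)⁻¹ * (t * (q : P) * t⁻¹) = (q : P)⁻¹ * t * q * t⁻¹ := by group
    rwa [h3] at h2
  set K := S₀ ⊓ Q with hK
  set c : ↥Q → ↥K := fun q => ⟨(q : P)⁻¹ * t * q * t⁻¹, ⟨hcS q, hcQ q⟩⟩ with hc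
  -- cocycle identity
  have hcoc : ∀ q₁ q₂ : ↥Q,
      (c (q₁ * q₂) : P) = (q₂ : P)⁻¹ * (c q₁ : P) * q₂ * (c q₂ : P) := by
    intro q₁ q₂
    show ((q₁ : P) * q₂)⁻¹ * t * ((q₁ : P) * (q₂ : P)) * t⁻¹
      = (q₂ : P)⁻¹ * ((q₁ : P)⁻¹ * t * q₁ * t⁻¹) * q₂ * ((q₂ : P)⁻¹ * t * q₂ * t⁻¹)
    group
  -- invariance under right multiplication by elements of S₀ ∩ Q
  have hfac : ∀ (q z : ↥Q), (z : P) ∈ S₀ → c (q * z) = c q := by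
    intro q z hz
    apply Subtype.ext
    have h1 : Commute (z : P) t⁻¹ :=
      Commute.inv_right (show Commute (z : P) t from hcomm z hz t htS)
    have h2 : Commute ((q : P)⁻¹ * t * q * t⁻¹) (z : P) := hcomm _ (hcS q) z hz
    show ((q : P) * z)⁻¹ * t * ((q : P) * (z : P)) * t⁻¹ = (q : P)⁻¹ * t * q * t⁻¹
    calc ((q : P) * z)⁻¹ * t * ((q : P) * (z : P)) * t⁻¹
        = (z : P)⁻¹ * (((q : P)⁻¹ * t * q) * ((z : P) * t⁻¹)) := by group
      _ = (z : P)⁻¹ * (((q : P)⁻¹ * t * q) * (t⁻¹ * (z : P))) := by rw [h1.eq]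
      _ = (z : P)⁻¹ * (((q : P)⁻¹ * t * q * t⁻¹) * (z : P)) := by group
      _ = (z : P)⁻¹ * ((z : P) * ((q : P)⁻¹ * t * q * t⁻¹)) := by rw [← h2.eq]
      _ = (q : P)⁻¹ * t * q * t⁻¹ := by group
  -- descend to the quotient
  set Qbar := ↥Q ⧸ fQ.ker with hQbar
  have hker : ∀ z : ↥Q, z ∈ fQ.ker → (z : P) ∈ S₀ := by
    intro z hz
    rw [MonoidHom.mem_ker, hfQ] at hz
    simpa [QuotientGroup.eq_one_iff] using hz
  set cbar : Qbar → ↥K := fun x => Quotient.liftOn' x c (by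
    intro a b hab
    rw [QuotientGroup.leftRel_apply] at hab
    have hba : b = a * (a⁻¹ * b) := by group
    rw [hba, hfac a (a⁻¹ * b) (hker _ hab)]) with hcbar
  have hcbar_mk : ∀ u : ↥Q, cbar (QuotientGroup.mk u) = c u := fun u => rfl
  haveI : Fintype Qbar := Fintype.ofFinite Qbar
  set z : ↥K := ∏ x : Qbar, cbar x with hz
  -- conjugation homomorphism on K
  have hγmem : ∀ (q : ↥Q) (k : ↥K), (q : P)⁻¹ * k * q ∈ K := by
    intro q k
    obtain ⟨hk1, hk2⟩ := Subgroup.mem_inf.mp k.2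
    refine Subgroup.mem_inf.mpr ⟨?_, ?_⟩
    · have := hN.conj_mem (k : P) hk1 (q : P)⁻¹
      simpa [inv_inv] using this
    · exact mul_mem (mul_mem (inv_mem q.2) hk2) q.2
  set γ : ↥Q → (↥K →* ↥K) := fun q =>
    { toFun := fun k => ⟨(q : P)⁻¹ * k * q, hγmem q k⟩
      map_one' := by apply Subtype.ext; show (q : P)⁻¹ * 1 * q = 1; group
      map_mul' := fun a b => by
        apply Subtype.ext
        show (q : P)⁻¹ * ((a : P) * b) * q = ((q : P)⁻¹ * a * q) * ((q : P)⁻¹ * b * q)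
        group } with hγ
  have step1 : ∀ (q : ↥Q) (x : Qbar),
      cbar (x * QuotientGroup.mk q) = γ q (cbar x) * c q := by
    intro q x
    refine QuotientGroup.induction_on x ?_
    intro u
    rw [← QuotientGroup.mk_mul fQ.ker u q, hcbar_mk, hcbar_mk]
    apply Subtype.ext
    show (c (u * q) : P) = ((q : P)⁻¹ * (c u : P) * q) * (c q : P)
    rw [hcoc u q]
  have step2 : ∀ q : ↥Q, z = γ q z * (c q) ^ E := by
    intro q
    have hre : ∏ x : Qbar, cbar (x * QuotientGroup.mk q) = z :=
      Equiv.prod_comp (Equiv.mulRight (QuotientGroup.mk q : Qbar)) cbar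
    calc z = ∏ x : Qbar, cbar (x * QuotientGroup.mk q) := hre.symm
      _ = ∏ x : Qbar, (γ q (cbar x) * c q) := Finset.prod_congr rfl (fun x _ => step1 q x)
      _ = (∏ x : Qbar, γ q (cbar x)) * (c q) ^ (Fintype.card Qbar) := by
          rw [Finset.prod_mul_distrib, Finset.prod_const, Finset.card_univ]
      _ = γ q z * (c q) ^ E := by
          rw [← map_prod, hE, Nat.card_eq_fintype_card]
  have step3 : ∀ (q : ↥Q) (m : ℕ),
      ((c q : P)) ^ m = (q : P)⁻¹ * t ^ m * q * (t ^ m)⁻¹ := by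
    intro q m
    induction m with
    | zero => simp
    | succ m ih =>
      have hsm : (q : P)⁻¹ * t ^ m * q * (t ^ m)⁻¹ ∈ S₀ := by
        have h1 : (q : P)⁻¹ * t ^ m * ((q : P)⁻¹)⁻¹ ∈ S₀ := hN.conj_mem _ (pow_mem htS m) _
        simp only [inv_inv] at h1
        exact mul_mem h1 (inv_mem (pow_mem htS m))
      have hcm : Commute ((q : P)⁻¹ * t ^ m * q * (t ^ m)⁻¹) t⁻¹ :=
        hcomm _ hsm t⁻¹ (inv_mem htS)
      calc ((c q : P)) ^ (m + 1) = (c q : P) * ((c q : P)) ^ m := by rw [pow_succ']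
        _ = ((q : P)⁻¹ * t * q * t⁻¹) * ((q : P)⁻¹ * t ^ m * q * (t ^ m)⁻¹) := by rw [ih]
        _ = ((q : P)⁻¹ * t * q) * (t⁻¹ * ((q : P)⁻¹ * t ^ m * q * (t ^ m)⁻¹)) := by group
        _ = ((q : P)⁻¹ * t * q) * (((q : P)⁻¹ * t ^ m * q * (t ^ m)⁻¹) * t⁻¹) := by
            rw [← hcm.eq]
        _ = (q : P)⁻¹ * t ^ (m + 1) * q * (t ^ (m + 1))⁻¹ := by group
  refine ⟨(z : P), z.2, ?_⟩
  intro q hq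
  set q' : ↥Q := ⟨q, hq⟩ with hq'
  have hz2 := step2 q'
  have hzP : (z : P) = ((q' : P)⁻¹ * z * q') * ((q' : P)⁻¹ * t ^ E * q' * (t ^ E)⁻¹) := by
    have h1 := congrArg (Subtype.val : ↥K → P) hz2
    have h2 : ((γ q' z * (c q') ^ E : ↥K) : P) = ((q' : P)⁻¹ * z * q') * ((c q' : P)) ^ E := by
      push_cast
      rfl
    have h2' : ((γ q' z * (c q') ^ E : ↥K) : P)
        = ((q' : P)⁻¹ * z * q') * ((q' : P)⁻¹ * t ^ E * q' * (t ^ E)⁻¹) := by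
      rw [h2, step3 q' E]
    exact h1.trans h2'
  have h3 : (q : P) * ((q : P)⁻¹ * (z : P) * q * ((q : P)⁻¹ * t ^ E * q * (t ^ E)⁻¹)) * t ^ E
      = (z : P) * t ^ E * q := by group
  calc (z : P) * t ^ E * q
      = (q : P) * ((q : P)⁻¹ * (z : P) * q * ((q : P)⁻¹ * t ^ E * q * (t ^ E)⁻¹)) * t ^ E :=
        h3.symm
    _ = (q : P) * (z : P) * t ^ E := by rw [← hzP]
    _ = q * ((z : P) * t ^ E) := by group

set_option synthInstance.maxHeartbeats 200000

/-- For discrete `p`-toral groups `Q ≤ P`, the group `Out_P(Q) = Aut_P(Q)/Inn(Q)` is a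
finite `p`-group, where `Aut_P(Q)` is the group of automorphisms of `Q` induced by
conjugation by elements of `N_P(Q)`. -/
theorem outP_finite_pGroup (p : ℕ) [Fact p.Prime] (P : Type*) [Group P]
    (hP : IsDiscretePToral p P) (Q : Subgroup P) :
    Finite ((Subgroup.normalizerMonoidHom Q).range ⧸
        ((MulAut.conj : ↥Q →* MulAut ↥Q).range).subgroupOf
          (Subgroup.normalizerMonoidHom Q).range) ∧
      IsPGroup p ((Subgroup.normalizerMonoidHom Q).range ⧸
        ((MulAut.conj : ↥Q →* MulAut ↥Q).range).subgroupOf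
          (Subgroup.normalizerMonoidHom Q).range) := by
  obtain ⟨S₀, hNorm, ⟨r, ⟨e⟩⟩, hfin, hpq⟩ := hP
  haveI := hNorm
  haveI := hfin
  set ψ : ↥(Subgroup.normalizer (Q : Set P)) →* ((Subgroup.normalizerMonoidHom Q).range ⧸
      ((MulAut.conj : ↥Q →* MulAut ↥Q).range).subgroupOf
        (Subgroup.normalizerMonoidHom Q).range) :=
    (QuotientGroup.mk' _).comp (Subgroup.normalizerMonoidHom Q).rangeRestrict with hψ
  have hψs : Function.Surjective ψ :=
    (QuotientGroup.mk'_surjective _).comp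
      (Subgroup.normalizerMonoidHom Q).rangeRestrict_surjective
  have hDp : IsPGroup p (Fin r → Prufer p) := pi_isPGroup (fun _ => prufer_isPGroup p)
  have hS₀p : IsPGroup p ↥S₀ := hDp.of_injective e.toMonoidHom e.injective
  have hPp : IsPGroup p P := isPGroup_of_normal S₀ hS₀p hpq
  refine ⟨?_, (hPp.to_subgroup (Subgroup.normalizer (Q : Set P))).of_surjective ψ hψs⟩
  -- commutativity of S₀
  have hcomm : ∀ x ∈ S₀, ∀ y ∈ S₀, x * y = y * x := by
    intro x hx y hy
    have h1 : (⟨x, hx⟩ : ↥S₀) * ⟨y, hy⟩ = ⟨y, hy⟩ * ⟨x, hx⟩ :=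
      e.injective (by rw [map_mul, map_mul, mul_comm])
    exact congrArg Subtype.val h1
  set fQ : ↥Q →* P ⧸ S₀ := (QuotientGroup.mk' S₀).comp Q.subtype with hfQ
  haveI : Finite (↥Q ⧸ fQ.ker) :=
    Finite.of_equiv _ (QuotientGroup.quotientKerEquivRange fQ).symm.toEquiv
  set E := Nat.card (↥Q ⧸ fQ.ker) with hE
  have hE0 : 0 < E := Nat.card_pos
  -- key: E-th powers of normalizing torus elements act by inner automorphisms
  have hkill : ∀ g : ↥(Subgroup.normalizer (Q : Set P)), (g : P) ∈ S₀ → ψ g ^ E = 1 := by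
    intro g hgS
    obtain ⟨z, hzK, hzc⟩ := key_conj S₀ Q hcomm fQ hfQ E hE (g : P) g.2 hgS
    obtain ⟨hzS, hzQ⟩ := Subgroup.mem_inf.mp hzK
    rw [← map_pow]
    show QuotientGroup.mk ((Subgroup.normalizerMonoidHom Q).rangeRestrict (g ^ E)) = 1
    rw [QuotientGroup.eq_one_iff, Subgroup.mem_subgroupOf]
    refine ⟨(⟨z, hzQ⟩ : ↥Q)⁻¹, ?_⟩
    have hcoe : (((Subgroup.normalizerMonoidHom Q).rangeRestrict (g ^ E) :
        ↥(Subgroup.normalizerMonoidHom Q).range) : MulAut ↥Q)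
        = (Subgroup.normalizerMonoidHom Q) (g ^ E) := rfl
    rw [hcoe]
    ext q
    have hq := hzc (q : P) q.2
    -- z * gP^E * q = q * (z * gP^E), derive gP^E q gP^-E = z⁻¹ q z
    have key : (g : P) ^ E * q * ((g : P) ^ E)⁻¹ = z⁻¹ * q * z := by
      have h5 : (g : P) ^ E * q = z⁻¹ * (q * (z * (g : P) ^ E)) := by
        rw [← hq]; group
      rw [h5]; group
    have hRHS : (((Q.normalizerMonoidHom (g ^ E)) q : ↥Q) : P)
        = (g : P) ^ E * q * ((g : P) ^ E)⁻¹ := by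
      simp [Subgroup.normalizerMonoidHom]
      rfl
    have hLHS : (((MulAut.conj (⟨z, hzQ⟩⁻¹ : ↥Q)) q : ↥Q) : P) = z⁻¹ * (q : P) * z := by
      simp [MulAut.conj]
    rw [hLHS, hRHS, key]
  -- restrict ψ to the torus part of the normalizer
  set F : ↥((Subgroup.normalizer (Q : Set P)) ⊓ S₀) →* ((Subgroup.normalizerMonoidHom Q).range ⧸
      ((MulAut.conj : ↥Q →* MulAut ↥Q).range).subgroupOf
        (Subgroup.normalizerMonoidHom Q).range) :=
    ψ.comp (Subgroup.inclusion inf_le_left) with hF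
  have hFE : ∀ a, F a ^ E = 1 := by
    intro a
    exact hkill (Subgroup.inclusion inf_le_left a) (Subgroup.mem_inf.mp a.2).2
  set j : ↥((Subgroup.normalizer (Q : Set P)) ⊓ S₀) →* (Fin r → Prufer p) :=
    e.toMonoidHom.comp (Subgroup.inclusion inf_le_right) with hj
  have hjinj : Function.Injective j :=
    e.injective.comp (Subgroup.inclusion_injective _)
  have htorD : ∀ x : (Fin r → Prufer p), ∃ n, 0 < n ∧ x ^ n = 1 := by
    intro x
    obtain ⟨k, hk⟩ := hDp x
    exact ⟨p ^ k, pow_pos (Fact.out (p := p.Prime)).pos k, hk⟩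
  have hVfin : (Set.range F).Finite :=
    range_finite_of_exponent j hjinj (fun n hn => pi_prufer_torsion_finite p r n hn)
      htorD F E hE0 hFE
  haveI hVfin' : Finite ↥F.range := by
    haveI := hVfin.to_subtype
    exact Finite.of_equiv ↥(Set.range ⇑F) (Equiv.subtypeEquivRight
      (fun x => show x ∈ Set.range ⇑F ↔ x ∈ F.range from Iff.rfl))
  have hVindex : F.range.index ≠ 0 := by
    have h2 : S₀.subgroupOf (Subgroup.normalizer (Q : Set P)) ≤ Subgroup.comap ψ F.range := by
      intro g hg
      rw [Subgroup.mem_comap]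
      refine ⟨⟨(g : P), Subgroup.mem_inf.mpr ⟨g.2, hg⟩⟩, ?_⟩
      have : Subgroup.inclusion (inf_le_left : (Subgroup.normalizer (Q : Set P)) ⊓ S₀ ≤ (Subgroup.normalizer (Q : Set P)))
          ⟨(g : P), Subgroup.mem_inf.mpr ⟨g.2, hg⟩⟩ = g := rfl
      rw [hF, MonoidHom.comp_apply, this]
    have h3 : F.range.index ∣ (S₀.subgroupOf (Subgroup.normalizer (Q : Set P))).index := by
      rw [← Subgroup.index_comap_of_surjective F.range hψs]
      exact Subgroup.index_dvd_of_le h2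
    have h4 : (S₀.subgroupOf (Subgroup.normalizer (Q : Set P))).index ∣ S₀.index :=
      Subgroup.relIndex_dvd_index_of_normal S₀ (Subgroup.normalizer (Q : Set P))
    have h5 : S₀.index ≠ 0 := Subgroup.index_ne_zero_of_finite
    intro h0
    rw [h0, zero_dvd_iff] at h3
    rw [h3, zero_dvd_iff] at h4
    exact h5 h4
  haveI : F.range.FiniteIndex := ⟨hVindex⟩
  exact Finite.of_equiv _ (Subgroup.groupEquivQuotientProdSubgroup (s := F.range)).symm
end

section
/- An endomorphism f of a group G is normal (i.e., commutes with all inner automorphisms of G) if and only if there exists an endomorphism χ of G such that [f(G), χ(G)] = 1 and f(x)χ(x) = x for all x ∈ G. -/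
/-- An endomorphism `f` of a group `G` is normal (commutes with all inner automorphisms)
iff there is an endomorphism `χ` of `G` with `[f(G), χ(G)] = 1` and `f(x)χ(x) = x` for
all `x ∈ G`. -/
theorem normal_endomorphism_iff_complement (G : Type*) [Group G] (f : G →* G) :
    (∀ g x : G, f (g * x * g⁻¹) = g * f x * g⁻¹) ↔
      ∃ χ : G →* G, (∀ x y : G, f x * χ y = χ y * f x) ∧ ∀ x : G, f x * χ x = x := by
  constructor
  · intro h
    have key : ∀ x y : G, ((f x)⁻¹ * x) * f y = f y * ((f x)⁻¹ * x) := by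
      intro x y
      have h1 : f x * f y * (f x)⁻¹ = x * f y * x⁻¹ := by
        have h2 := h x y
        rw [map_mul, map_mul, map_inv] at h2
        exact h2
      calc (f x)⁻¹ * x * f y = (f x)⁻¹ * (x * f y * x⁻¹) * x := by group
        _ = (f x)⁻¹ * (f x * f y * (f x)⁻¹) * x := by rw [h1]
        _ = f y * ((f x)⁻¹ * x) := by group
    have keyinv : ∀ x y : G, ((f x)⁻¹ * x) * (f y)⁻¹ = (f y)⁻¹ * ((f x)⁻¹ * x) := by
      intro x y
      have c : Commute ((f x)⁻¹ * x) (f y) := key x y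
      exact c.inv_right.eq
    refine ⟨{ toFun := fun x => (f x)⁻¹ * x, map_one' := by simp, map_mul' := ?_ }, ?_, ?_⟩
    · intro x y
      have := keyinv x y
      calc (f (x * y))⁻¹ * (x * y) = (f y)⁻¹ * (((f x)⁻¹ * x) * y) := by
            rw [map_mul, mul_inv_rev]; group
        _ = (((f x)⁻¹ * x) * (f y)⁻¹) * y := by rw [keyinv x y]; group
        _ = ((f x)⁻¹ * x) * ((f y)⁻¹ * y) := by group
    · intro x y
      exact (key y x).symm
    · intro x
      simp only [MonoidHom.coe_mk, OneHom.coe_mk]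
      group
  · rintro ⟨χ, hc, hx⟩ g x
    calc f (g * x * g⁻¹) = f g * f x * (f g)⁻¹ := by rw [map_mul, map_mul, map_inv]
      _ = f g * (f x * χ g) * (χ g)⁻¹ * (f g)⁻¹ := by group
      _ = f g * (χ g * f x) * (χ g)⁻¹ * (f g)⁻¹ := by rw [hc x g]
      _ = (f g * χ g) * f x * (f g * χ g)⁻¹ := by group
      _ = g * f x * g⁻¹ := by rw [hx g]
end

section
/- Let G be a group, and let f be a surjective endomorphism of G such that there exists an endomorphism χ of G with [f(G), χ(G)] = 1 and f(x)χ(x) = x for all x ∈ G. Then f(x)x⁻¹ ∈ Z(G) for all x ∈ G and f restricts to the identity on the commutator subgroup [G,G]. -/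
open scoped commutatorElement

private lemma aux_comm_left {G : Type*} [Group G] (a x v : G) (ha : ∀ g, a * g = g * a) :
    ⁅a * x, v⁆ = ⁅x, v⁆ := by
  simp only [commutatorElement_def, mul_inv_rev]
  calc a * x * v * (x⁻¹ * a⁻¹) * v⁻¹ = a * (x * v * x⁻¹) * a⁻¹ * v⁻¹ := by group
    _ = x * v * x⁻¹ * a * a⁻¹ * v⁻¹ := by rw [ha (x * v * x⁻¹)]
    _ = x * v * x⁻¹ * v⁻¹ := by group

private lemma aux_comm_right {G : Type*} [Group G] (b u y : G) (hb : ∀ g, b * g = g * b) :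
    ⁅u, b * y⁆ = ⁅u, y⁆ := by
  calc ⁅u, b * y⁆ = ⁅b * y, u⁆⁻¹ := (commutatorElement_inv (b * y) u).symm
    _ = ⁅y, u⁆⁻¹ := by rw [aux_comm_left b y u hb]
    _ = ⁅u, y⁆ := commutatorElement_inv y u

/-- A surjective normal endomorphism `f` of `G` (i.e. one admitting `χ` with commuting
image and `f(x)χ(x) = x`) satisfies `f(x)x⁻¹ ∈ Z(G)` for all `x`, and restricts to the
identity on the commutator subgroup `[G,G]`. -/
theorem surjective_normal_endomorphism_center_and_commutator (G : Type*) [Group G]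
    (f : G →* G) (hf : Function.Surjective f)
    (hχ : ∃ χ : G →* G, (∀ x y : G, f x * χ y = χ y * f x) ∧ ∀ x : G, f x * χ x = x) :
    (∀ x : G, f x * x⁻¹ ∈ Subgroup.center G) ∧ ∀ x ∈ commutator G, f x = x := by
  obtain ⟨χ, hcomm, hfx⟩ := hχ
  -- χ x is central
  have hcent : ∀ x : G, χ x ∈ Subgroup.center G := by
    intro x
    rw [Subgroup.mem_center_iff]
    intro g
    obtain ⟨y, rfl⟩ := hf g
    exact hcomm y x
  have hcent' : ∀ x g : G, (χ x)⁻¹ * g = g * (χ x)⁻¹ := by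
    intro x g
    exact (Commute.symm (Commute.inv_right
      ((Subgroup.mem_center_iff.mp (hcent x) g : g * χ x = χ x * g)))).eq
  have hfeq : ∀ x : G, f x = (χ x)⁻¹ * x := by
    intro x
    rw [eq_inv_mul_iff_mul_eq, ← hcomm x x]
    exact hfx x
  have hcentral : ∀ x : G, f x * x⁻¹ ∈ Subgroup.center G := by
    intro x
    rw [hfeq x, mul_assoc, mul_inv_cancel, mul_one]
    exact Subgroup.inv_mem _ (hcent x)
  refine ⟨hcentral, ?_⟩
  have hfix : ∀ x y : G, f ⁅x, y⁆ = ⁅x, y⁆ := by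
    intro x y
    rw [map_commutatorElement, hfeq x, hfeq y, aux_comm_left _ _ _ (hcent' x),
      aux_comm_right _ _ _ (hcent' y)]
  intro x hx
  have hle : commutator G ≤ f.eqLocus (MonoidHom.id G) := by
    rw [commutator_def, Subgroup.commutator_le]
    intro g _ h _
    exact hfix g h
  exact hle hx
end

section
/- Let G be a group and f₁, f₂ endomorphisms of G such that [f₁(G), f₂(G)] = 1, f₁(x)f₂(x) = x for all x ∈ G, and both f₁ and f₂ are locally nilpotent. Then G is trivial. -/
/-- If `f₁, f₂` are locally nilpotent endomorphisms of `G` with elementwise-commuting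
images whose pointwise product is the identity, then `G` is trivial. -/
theorem trivial_of_two_locally_nilpotent_complements (G : Type*) [Group G]
    (f₁ f₂ : Monoid.End G)
    (hcomm : ∀ x y : G, f₁ x * f₂ y = f₂ y * f₁ x)
    (hsum : ∀ x : G, f₁ x * f₂ x = x)
    (hn₁ : ∀ x : G, ∃ n : ℕ, 1 ≤ n ∧ (f₁ ^ n) x = 1)
    (hn₂ : ∀ x : G, ∃ n : ℕ, 1 ≤ n ∧ (f₂ ^ n) x = 1) :
    ∀ x : G, x = 1 := by
  have hA : ∀ x : G, f₁ x = 1 → x = 1 := by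
    intro x h
    have hx : f₂ x = x := by
      have := hsum x; rwa [h, one_mul] at this
    obtain ⟨m, -, hm⟩ := hn₂ x
    have hfix : ∀ k : ℕ, (f₂ ^ k) x = x := by
      intro k
      induction k with
      | zero => rfl
      | succ k ih =>
          rw [pow_succ]
          show (f₂ ^ k) (f₂ x) = x
          rw [hx, ih]
    rw [hfix m] at hm
    exact hm
  have hB : ∀ (n : ℕ) (x : G), (f₁ ^ n) x = 1 → x = 1 := by
    intro n
    induction n with
    | zero => intro x h; exact h
    | succ n ih =>
        intro x h
        apply hA
        apply ih
        rw [pow_succ] at h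
        exact h
  intro x
  obtain ⟨n, -, hn⟩ := hn₁ x
  exact hB n x hn
end
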